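/- arXiv:math/0606505 — 3 statements merged into one kernel-verified Lean document; each statement's English description precedes it below -/
import Mathlib

section
/- For every natural number n, the alternating sum ∑_{j=0}^{n+1} (-1)^j * C(n+1, j) * (n+1-2j)^{n+1} equals (n+1)! * 2^{n+1}. -/
open Finset Function fwdDiff

lemma fwdDiff_pow_expand (h : ℤ) (k : ℕ) :
    Δ_[h] (fun x : ℤ => x ^ k) =
      ∑ i ∈ Finset.range k, ((k.choose i : ℤ) * h ^ (k - i)) • (fun x : ℤ => x ^ i) := by
  funext x
  simp only [fwdDiff, Finset.sum_apply, Pi.smul_apply, zsmul_eq_mul, smul_eq_mul]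
  rw [add_pow, Finset.sum_range_succ]
  simp [mul_comm, mul_assoc, mul_left_comm]

lemma fwdDiff_iter_pow_lt (h : ℤ) : ∀ m k : ℕ, k < m →
    Δ_[h] ^[m] (fun x : ℤ => x ^ k) = fun _ => 0 := by
  intro m
  induction m with
  | zero => intro k hk; omega
  | succ m ih =>
    intro k hk
    rw [Function.iterate_succ_apply, fwdDiff_pow_expand, fwdDiff_iter_finset_sum]
    funext x
    simp only [Finset.sum_apply, Pi.zero_apply]
    apply Finset.sum_eq_zero
    intro i hi
    rw [Finset.mem_range] at hi
    rw [fwdDiff_iter_const_smul, ih i (by omega)]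
    simp

lemma fwdDiff_iter_pow_self (h : ℤ) : ∀ m : ℕ,
    Δ_[h] ^[m] (fun x : ℤ => x ^ m) = fun _ => (Nat.factorial m : ℤ) * h ^ m := by
  intro m
  induction m with
  | zero => funext x; simp
  | succ m ih =>
    rw [Function.iterate_succ_apply, fwdDiff_pow_expand, fwdDiff_iter_finset_sum]
    funext x
    simp only [Finset.sum_apply]
    rw [Finset.sum_range_succ,
      Finset.sum_eq_zero (fun i hi => by
        rw [Finset.mem_range] at hi
        rw [fwdDiff_iter_const_smul, fwdDiff_iter_pow_lt h m i hi]
        simp),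
      fwdDiff_iter_const_smul, ih]
    simp only [Pi.smul_apply, smul_eq_mul, zero_add]
    rw [Nat.choose_succ_self_right, Nat.factorial_succ, show m + 1 - m = 1 by omega, pow_one]
    push_cast
    ring

theorem alternating_sum_top (n : ℕ) :
    ∑ j ∈ Finset.range (n + 2),
      (-1 : ℤ) ^ j * (Nat.choose (n + 1) j : ℤ) * ((n : ℤ) + 1 - 2 * j) ^ (n + 1)
      = (Nat.factorial (n + 1) : ℤ) * 2 ^ (n + 1) := by
  have key := fwdDiff_iter_eq_sum_shift (-2 : ℤ) (fun x : ℤ => x ^ (n + 1)) (n + 1) ((n : ℤ) + 1)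
  rw [fwdDiff_iter_pow_self (-2 : ℤ) (n + 1)] at key
  have expand : ∀ k ∈ Finset.range (n + 1 + 1),
      ((-1 : ℤ) ^ (n + 1 - k) * ((n + 1).choose k : ℤ)) • (((n : ℤ) + 1 + k • (-2 : ℤ)) ^ (n + 1))
        = (-1 : ℤ) ^ (n + 1) *
          ((-1 : ℤ) ^ k * ((n + 1).choose k : ℤ) * ((n : ℤ) + 1 - 2 * k) ^ (n + 1)) := by
    intro k hk
    rw [Finset.mem_range] at hk
    have hs : (-1 : ℤ) ^ (n + 1 - k) = (-1) ^ (n + 1) * (-1) ^ k := by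
      rw [← pow_add, show n + 1 + k = (n + 1 - k) + 2 * k by omega, pow_add, pow_mul]
      simp
    rw [hs]
    simp only [zsmul_eq_mul, smul_eq_mul]
    ring
  rw [Finset.sum_congr rfl expand, ← Finset.mul_sum, neg_pow 2 (n + 1)] at key
  have hne : ((-1 : ℤ) ^ (n + 1)) ≠ 0 := pow_ne_zero _ (by norm_num)
  refine (mul_left_cancel₀ hne ?_).symm
  linear_combination key
end

section
/- For every natural number n, the alternating sum ∑_{j=0}^{n+1} (-1)^j * C(n+1, j) * (n+1-2j)^{n+2} equals 0. -/
theorem alternating_sum_n_plus_two (n : ℕ) :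
    ∑ j ∈ Finset.range (n + 2),
      (-1 : ℤ) ^ j * (Nat.choose (n + 1) j : ℤ) * ((n : ℤ) + 1 - 2 * j) ^ (n + 2) = 0 := by
  set f : ℕ → ℤ := fun j =>
    (-1 : ℤ) ^ j * (Nat.choose (n + 1) j : ℤ) * ((n : ℤ) + 1 - 2 * j) ^ (n + 2) with hf
  have h := Finset.sum_range_reflect f (n + 2)
  have key : ∀ j ∈ Finset.range (n + 2), f (n + 2 - 1 - j) = -f j := by
    intro j hj
    have hj' : j ≤ n + 1 := Nat.lt_succ_iff.mp (Finset.mem_range.mp hj)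
    have h1 : n + 2 - 1 - j = n + 1 - j := rfl
    have hc : Nat.choose (n + 1) (n + 1 - j) = Nat.choose (n + 1) j :=
      Nat.choose_symm hj'
    have hcast : ((n + 1 - j : ℕ) : ℤ) = (n : ℤ) + 1 - j := by
      push_cast [Nat.cast_sub hj']; ring
    have hsign : (-1 : ℤ) ^ (n + 1 - j) * (-1) ^ j = (-1) ^ (n + 1) := by
      rw [← pow_add, Nat.sub_add_cancel hj']
    have hsq : ((-1 : ℤ) ^ j) * ((-1 : ℤ) ^ j) = 1 := by
      rw [← pow_add]; exact (neg_one_pow_eq_one_iff_even (by norm_num)).mpr ⟨j, rfl⟩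
    have hsign' : (-1 : ℤ) ^ (n + 1 - j) = (-1) ^ (n + 1) * (-1) ^ j := by
      calc (-1 : ℤ) ^ (n + 1 - j) = (-1) ^ (n + 1 - j) * ((-1) ^ j * (-1) ^ j) := by
            rw [hsq, mul_one]
        _ = ((-1) ^ (n + 1 - j) * (-1) ^ j) * (-1) ^ j := by ring
        _ = (-1) ^ (n + 1) * (-1) ^ j := by rw [hsign]
    have hbase : (n : ℤ) + 1 - 2 * ((n + 1 - j : ℕ) : ℤ) = -((n : ℤ) + 1 - 2 * j) := by
      rw [hcast]; ring
    have hodd : (-1 : ℤ) ^ (n + 1) * (-1) ^ (n + 2) = -1 := by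
      rw [← pow_add]; exact Odd.neg_one_pow ⟨n + 1, by ring⟩
    rw [h1]
    show (-1 : ℤ) ^ (n + 1 - j) * (Nat.choose (n + 1) (n + 1 - j) : ℤ) *
        ((n : ℤ) + 1 - 2 * ((n + 1 - j : ℕ) : ℤ)) ^ (n + 2) =
        -((-1 : ℤ) ^ j * (Nat.choose (n + 1) j : ℤ) * ((n : ℤ) + 1 - 2 * j) ^ (n + 2))
    rw [hc, hsign', hbase]
    set X := (n : ℤ) + 1 - 2 * (j : ℤ) with hX
    rw [neg_pow X (n + 2)]
    generalize X ^ (n + 2) = y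
    linear_combination ((Nat.choose (n + 1) j : ℤ) * (-1) ^ j * y) * hodd
  have h2 : ∑ j ∈ Finset.range (n + 2), f (n + 2 - 1 - j) =
      ∑ j ∈ Finset.range (n + 2), -f j := Finset.sum_congr rfl key
  rw [h2, Finset.sum_neg_distrib] at h
  linarith [h]
end

section
/- For all natural numbers n and all i ≤ n with i ≢ n (mod 2), the sum ∑_{j=0}^{n} (-1)^j * C(n, j) * (n-2j)^i equals 0; and for i = n it equals n! * 2^n. -/
open Finset

private lemma Sstep (n : ℕ) (f : ℕ → ℤ) :
    ∑ j ∈ range (n + 2), (-1 : ℤ) ^ j * ((n + 1).choose j : ℤ) * f j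
      = ∑ j ∈ range (n + 1), (-1 : ℤ) ^ j * (n.choose j : ℤ) * f j
        - ∑ j ∈ range (n + 1), (-1 : ℤ) ^ j * (n.choose j : ℤ) * f (j + 1) := by
  have h1 : ∑ j ∈ range (n + 2), (-1 : ℤ) ^ j * ((n + 1).choose j : ℤ) * f j
      = (∑ k ∈ range (n + 1),
          (-1 : ℤ) ^ (k + 1) * ((n.choose k : ℤ) + (n.choose (k + 1) : ℤ)) * f (k + 1)) + f 0 := by
    rw [Finset.sum_range_succ' _ (n + 1)]
    simp [Nat.choose_succ_succ]
  have h2 : ∑ j ∈ range (n + 1), (-1 : ℤ) ^ j * (n.choose j : ℤ) * f j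
      = (∑ k ∈ range (n + 1), (-1 : ℤ) ^ (k + 1) * (n.choose (k + 1) : ℤ) * f (k + 1)) + f 0 := by
    rw [Finset.sum_range_succ' _ n,
      Finset.sum_range_succ (fun k => (-1 : ℤ) ^ (k + 1) * (n.choose (k + 1) : ℤ) * f (k + 1)) n]
    simp [Nat.choose_succ_self]
  rw [h1, h2]
  have h3 : ∑ k ∈ range (n + 1),
      (-1 : ℤ) ^ (k + 1) * ((n.choose k : ℤ) + (n.choose (k + 1) : ℤ)) * f (k + 1)
      = ∑ k ∈ range (n + 1), (-1 : ℤ) ^ (k + 1) * (n.choose (k + 1) : ℤ) * f (k + 1)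
        - ∑ k ∈ range (n + 1), (-1 : ℤ) ^ k * (n.choose k : ℤ) * f (k + 1) := by
    rw [← Finset.sum_sub_distrib]
    apply Finset.sum_congr rfl
    intro k _
    ring
  rw [h3]
  ring

private lemma main_aux : ∀ n : ℕ, ∀ i : ℕ, ∀ c d : ℤ, i ≤ n →
    ∑ j ∈ range (n + 1), (-1 : ℤ) ^ j * (n.choose j : ℤ) * (c + d * j) ^ i
      = if i = n then (-d) ^ n * n.factorial else 0 := by
  intro n
  induction n with
  | zero =>
    intro i c d hi
    interval_cases i
    simp
  | succ n ih =>
    intro i c d hi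
    have hs : ∑ j ∈ range (n + 2), (-1 : ℤ) ^ j * ((n + 1).choose j : ℤ) * (c + d * j) ^ i
        = ∑ j ∈ range (n + 1), (-1 : ℤ) ^ j * (n.choose j : ℤ) * (c + d * j) ^ i
          - ∑ j ∈ range (n + 1), (-1 : ℤ) ^ j * (n.choose j : ℤ) * ((c + d) + d * j) ^ i := by
      have := Sstep n (fun j : ℕ => (c + d * (j : ℤ)) ^ i)
      simp only [Nat.cast_add, Nat.cast_one] at this
      rw [this]
      congr 1
      apply Finset.sum_congr rfl
      intro j _
      push_cast
      ring_nf
    rcases Nat.lt_or_ge i (n + 1) with hlt | hge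
    · have hle : i ≤ n := Nat.lt_succ_iff.mp hlt
      rw [hs, ih i c d hle, ih i (c + d) d hle]
      have : i ≠ n + 1 := by omega
      simp [this]
    · have hieq : i = n + 1 := le_antisymm hi hge
      subst hieq
      have hexp : ∀ j : ℕ, ((c + d) + d * (j : ℤ)) ^ (n + 1)
          = ∑ k ∈ range (n + 2), (c + d * j) ^ k * d ^ (n + 1 - k) * ((n + 1).choose k : ℤ) := by
        intro j
        have := add_pow (c + d * (j : ℤ)) d (n + 1)
        rw [← this]
        ring_nf
      have h2 : ∑ j ∈ range (n + 1), (-1 : ℤ) ^ j * (n.choose j : ℤ) * ((c + d) + d * j) ^ (n + 1)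
          = (∑ j ∈ range (n + 1), (-1 : ℤ) ^ j * (n.choose j : ℤ) * (c + d * j) ^ (n + 1))
            + (-d) ^ n * n.factorial * (d * (n + 1)) := by
        calc ∑ j ∈ range (n + 1), (-1 : ℤ) ^ j * (n.choose j : ℤ) * ((c + d) + d * j) ^ (n + 1)
            = ∑ j ∈ range (n + 1), (-1 : ℤ) ^ j * (n.choose j : ℤ) *
                ∑ k ∈ range (n + 2), (c + d * j) ^ k * d ^ (n + 1 - k) * ((n + 1).choose k : ℤ) := by
              apply Finset.sum_congr rfl
              intro j _
              rw [hexp j]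
          _ = ∑ k ∈ range (n + 2),
                (∑ j ∈ range (n + 1), (-1 : ℤ) ^ j * (n.choose j : ℤ) * (c + d * j) ^ k)
                  * (d ^ (n + 1 - k) * ((n + 1).choose k : ℤ)) := by
              simp only [Finset.mul_sum]
              rw [Finset.sum_comm]
              apply Finset.sum_congr rfl
              intro k _
              rw [Finset.sum_mul]
              apply Finset.sum_congr rfl
              intro j _
              ring
          _ = (∑ k ∈ range (n + 1),
                (∑ j ∈ range (n + 1), (-1 : ℤ) ^ j * (n.choose j : ℤ) * (c + d * j) ^ k)
                  * (d ^ (n + 1 - k) * ((n + 1).choose k : ℤ)))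
              + (∑ j ∈ range (n + 1), (-1 : ℤ) ^ j * (n.choose j : ℤ) * (c + d * j) ^ (n + 1))
                  * (d ^ (n + 1 - (n + 1)) * ((n + 1).choose (n + 1) : ℤ)) :=
              Finset.sum_range_succ _ (n + 1)
          _ = (∑ j ∈ range (n + 1), (-1 : ℤ) ^ j * (n.choose j : ℤ) * (c + d * j) ^ (n + 1))
              + (-d) ^ n * n.factorial * (d * (n + 1)) := by
              have hrest : ∑ k ∈ range (n + 1),
                  (∑ j ∈ range (n + 1), (-1 : ℤ) ^ j * (n.choose j : ℤ) * (c + d * j) ^ k)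
                    * (d ^ (n + 1 - k) * ((n + 1).choose k : ℤ))
                  = (-d) ^ n * n.factorial * (d * (n + 1)) := by
                rw [Finset.sum_eq_single n]
                · rw [ih n c d le_rfl, if_pos rfl]
                  simp [Nat.choose_succ_self_right]
                · intro k hk hkn
                  rw [ih k c d (Nat.lt_succ_iff.mp (Finset.mem_range.mp hk)), if_neg hkn,
                    zero_mul]
                · intro h
                  exact absurd (Finset.self_mem_range_succ n) h
              rw [hrest]
              simp
              ring
      rw [hs, h2, if_pos rfl, Nat.factorial_succ]
      push_cast
      ring

theorem alternating_sum_degree_n (n : ℕ) :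
    (∀ i : ℕ, i ≤ n → i % 2 ≠ n % 2 →
      ∑ j ∈ Finset.range (n + 1),
        (-1 : ℤ) ^ j * (Nat.choose n j : ℤ) * ((n : ℤ) - 2 * j) ^ i = 0) ∧
    ∑ j ∈ Finset.range (n + 1),
      (-1 : ℤ) ^ j * (Nat.choose n j : ℤ) * ((n : ℤ) - 2 * j) ^ n
      = (Nat.factorial n : ℤ) * 2 ^ n := by
  have key : ∀ i : ℕ, i ≤ n →
      ∑ j ∈ Finset.range (n + 1), (-1 : ℤ) ^ j * (Nat.choose n j : ℤ) * ((n : ℤ) - 2 * j) ^ i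
        = if i = n then (2 : ℤ) ^ n * n.factorial else 0 := by
    intro i hi
    have := main_aux n i (n : ℤ) (-2) hi
    simp only [neg_neg] at this
    rw [← this]
    apply Finset.sum_congr rfl
    intro j _
    ring_nf
  constructor
  · intro i hi hpar
    have hne : i ≠ n := fun h => hpar (by rw [h])
    rw [key i hi, if_neg hne]
  · rw [key n le_rfl, if_pos rfl]
    ring
end
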